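/- arXiv:cs/0501032 — 4 statements merged into one kernel-verified Lean document; each statement's English description precedes it below -/
import Mathlib

section
/- In a star-continuous partially additive Kleene algebra, with A ⊙ B = {a·b | a ∈ A, b ∈ B}, the star-ideal generated by a product satisfies ⟨A ⊙ B⟩ = ⟨⟨A⟩ ⊙ B⟩ = ⟨A ⊙ ⟨B⟩⟩. -/
/-- A partially additive Kleene algebra: partial `+` (via `summable`), total `·`, `*`,
constants 0 and 1, satisfying the PKA axioms. -/
structure PKA (K : Type*) where
  summable : K → K → Prop
  add : K → K → K
  mul : K → K → K
  star : K → K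
  zero : K
  one : K
  add_assoc : ∀ x y z, summable x y → summable (add x y) z → summable y z →
    summable x (add y z) ∧ add (add x y) z = add x (add y z)
  add_comm : ∀ x y, summable x y → summable y x ∧ add x y = add y x
  summable_zero : ∀ x, summable x zero
  add_zero : ∀ x, add x zero = x
  summable_self : ∀ x, summable x x
  add_self : ∀ x, add x x = x
  mul_assoc : ∀ x y z, mul x (mul y z) = mul (mul x y) z
  one_mul : ∀ x, mul one x = x
  mul_one : ∀ x, mul x one = x
  left_distrib : ∀ x y z, summable x y →
    summable (mul z x) (mul z y) ∧ mul z (add x y) = add (mul z x) (mul z y)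
  right_distrib : ∀ x y z, summable x y →
    summable (mul x z) (mul y z) ∧ mul (add x y) z = add (mul x z) (mul y z)
  zero_mul : ∀ x, mul zero x = zero
  mul_zero : ∀ x, mul x zero = zero
  one_le_star : ∀ x, summable one (star x) ∧ add one (star x) = star x
  mul_star_le_star : ∀ x,
    summable (mul x (star x)) (star x) ∧ add (mul x (star x)) (star x) = star x
  star_mul_le_star : ∀ x,
    summable (mul (star x) x) (star x) ∧ add (mul (star x) x) (star x) = star x
  star_ind_left : ∀ a x, (summable (mul a x) x ∧ add (mul a x) x = x) →
    summable (mul (star a) x) x ∧ add (mul (star a) x) x = x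
  star_ind_right : ∀ a x, (summable (mul x a) x ∧ add (mul x a) x = x) →
    summable (mul x (star a)) x ∧ add (mul x (star a)) x = x

/-- The natural order on a PKA: `a ≤ b` iff `a` is summable with `b` and `a + b = b`. -/
def PKA.le {K : Type*} (P : PKA K) (a b : K) : Prop :=
  P.summable a b ∧ P.add a b = b

/-- Powers: `b^0 = 1`, `b^(n+1) = b·b^n`. -/
def PKA.pow {K : Type*} (P : PKA K) (b : K) : ℕ → K
  | 0 => P.one
  | n + 1 => P.mul b (P.pow b n)

/-- Star-continuity: `a·b*·c` is the least upper bound of `{a·b^n·c | n < ω}`. -/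
def PKA.StarContinuous {K : Type*} (P : PKA K) : Prop :=
  ∀ a b c,
    (∀ n, P.le (P.mul a (P.mul (P.pow b n) c)) (P.mul a (P.mul (P.star b) c))) ∧
    (∀ w, (∀ n, P.le (P.mul a (P.mul (P.pow b n) c)) w) →
      P.le (P.mul a (P.mul (P.star b) c)) w)

/-- A star-ideal: nonempty, closed under defined sums, downward closed,
and closed under the star rule. -/
def PKA.IsStarIdeal {K : Type*} (P : PKA K) (A : Set K) : Prop :=
  A.Nonempty ∧
  (∀ a ∈ A, ∀ b ∈ A, P.summable a b → P.add a b ∈ A) ∧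
  (∀ x y, y ∈ A → P.le x y → x ∈ A) ∧
  (∀ a b c, (∀ n, P.mul a (P.mul (P.pow b n) c) ∈ A) →
    P.mul a (P.mul (P.star b) c) ∈ A)

/-- The star-ideal generated by `A`: the intersection of all star-ideals containing `A`. -/
def PKA.gen {K : Type*} (P : PKA K) (A : Set K) : Set K :=
  ⋂₀ {I | P.IsStarIdeal I ∧ A ⊆ I}


section Aux
variable {K : Type*} (P : PKA K)

lemma pka_zero_mem {I : Set K} (hI : P.IsStarIdeal I) : P.zero ∈ I := by
  obtain ⟨⟨a, ha⟩, _, hdown, _⟩ := hI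
  refine hdown _ a ha ⟨(P.add_comm a P.zero (P.summable_zero a)).1, ?_⟩
  rw [← (P.add_comm a P.zero (P.summable_zero a)).2, P.add_zero]

lemma pka_isStarIdeal_gen (A : Set K) : P.IsStarIdeal (P.gen A) := by
  refine ⟨⟨P.zero, ?_⟩, ?_, ?_, ?_⟩
  · exact fun I hI => pka_zero_mem P hI.1
  · intro a ha b hb hs I hI
    exact hI.1.2.1 a (ha I hI) b (hb I hI) hs
  · intro x y hy hxy I hI
    exact hI.1.2.2.1 x y (hy I hI) hxy
  · intro a b c hn I hI
    exact hI.1.2.2.2 a b c (fun n => hn n I hI)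

lemma pka_subset_gen (A : Set K) : A ⊆ P.gen A :=
  fun x hx I hI => hI.2 hx

lemma pka_gen_le {A I : Set K} (hI : P.IsStarIdeal I) (hAI : A ⊆ I) : P.gen A ⊆ I :=
  Set.sInter_subset_of_mem ⟨hI, hAI⟩

lemma pka_gen_mono {A B : Set K} (hAB : A ⊆ B) : P.gen A ⊆ P.gen B :=
  pka_gen_le P (pka_isStarIdeal_gen P B) (hAB.trans (pka_subset_gen P B))

lemma pka_le_mul_right {x y : K} (b : K) (hxy : P.le x y) :
    P.le (P.mul x b) (P.mul y b) := by
  obtain ⟨hs, he⟩ := hxy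
  obtain ⟨hs', he'⟩ := P.right_distrib x y b hs
  exact ⟨hs', by rw [← he', he]⟩

lemma pka_le_mul_left {x y : K} (a : K) (hxy : P.le x y) :
    P.le (P.mul a x) (P.mul a y) := by
  obtain ⟨hs, he⟩ := hxy
  obtain ⟨hs', he'⟩ := P.left_distrib x y a hs
  exact ⟨hs', by rw [← he', he]⟩

end Aux

/-- With A ⊙ B the set of products a·b, gen (A ⊙ B) = gen (gen A ⊙ B) = gen (A ⊙ gen B)
in a star-continuous PKA. -/
theorem pka_gen_prod {K : Type*} (P : PKA K) (h : P.StarContinuous) :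
    ∀ A B : Set K,
      P.gen (Set.image2 P.mul A B) = P.gen (Set.image2 P.mul (P.gen A) B) ∧
      P.gen (Set.image2 P.mul A B) = P.gen (Set.image2 P.mul A (P.gen B)) := by
  intro A B
  have hgen := pka_isStarIdeal_gen P (Set.image2 P.mul A B)
  obtain ⟨hne, hadd, hdown, hstar⟩ := hgen
  constructor
  · apply subset_antisymm
    · exact pka_gen_mono P (Set.image2_subset (pka_subset_gen P A) subset_rfl)
    · apply pka_gen_le P (pka_isStarIdeal_gen P _)
      rintro x ⟨a, ha, b, hb, rfl⟩
      -- show a ∈ { a | P.mul a b ∈ gen (A⊙B) }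
      have key : P.gen A ⊆ {a | P.mul a b ∈ P.gen (Set.image2 P.mul A B)} := by
        apply pka_gen_le P
        · refine ⟨⟨P.zero, ?_⟩, ?_, ?_, ?_⟩
          · show P.mul P.zero b ∈ P.gen (Set.image2 P.mul A B)
            rw [P.zero_mul]
            exact pka_zero_mem P (pka_isStarIdeal_gen P _)
          · intro a1 h1 a2 h2 hs
            show P.mul (P.add a1 a2) b ∈ P.gen (Set.image2 P.mul A B)
            rw [(P.right_distrib a1 a2 b hs).2]
            exact hadd _ h1 _ h2 (P.right_distrib a1 a2 b hs).1
          · intro x y hy hxy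
            exact hdown _ _ hy (pka_le_mul_right P b hxy)
          · intro u v w hn
            show P.mul (P.mul u (P.mul (P.star v) w)) b ∈ P.gen (Set.image2 P.mul A B)
            have e : ∀ z, P.mul (P.mul u (P.mul z w)) b
                = P.mul u (P.mul z (P.mul w b)) := by
              intro z
              rw [← P.mul_assoc, ← P.mul_assoc]
            rw [e]
            exact hstar u v (P.mul w b) (fun n => by rw [← e]; exact hn n)
        · intro a ha
          exact pka_subset_gen P _ (Set.mem_image2_of_mem ha hb)
      exact key ha
  · apply subset_antisymm
    · exact pka_gen_mono P (Set.image2_subset subset_rfl (pka_subset_gen P B))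
    · apply pka_gen_le P (pka_isStarIdeal_gen P _)
      rintro x ⟨a, ha, b, hb, rfl⟩
      have key : P.gen B ⊆ {b | P.mul a b ∈ P.gen (Set.image2 P.mul A B)} := by
        apply pka_gen_le P
        · refine ⟨⟨P.zero, ?_⟩, ?_, ?_, ?_⟩
          · show P.mul a P.zero ∈ P.gen (Set.image2 P.mul A B)
            rw [P.mul_zero]
            exact pka_zero_mem P (pka_isStarIdeal_gen P _)
          · intro b1 h1 b2 h2 hs
            show P.mul a (P.add b1 b2) ∈ P.gen (Set.image2 P.mul A B)
            rw [(P.left_distrib b1 b2 a hs).2]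
            exact hadd _ h1 _ h2 (P.left_distrib b1 b2 a hs).1
          · intro x y hy hxy
            exact hdown _ _ hy (pka_le_mul_left P a hxy)
          · intro u v w hn
            show P.mul a (P.mul u (P.mul (P.star v) w)) ∈ P.gen (Set.image2 P.mul A B)
            rw [P.mul_assoc]
            exact hstar (P.mul a u) v w
              (fun n => by rw [← P.mul_assoc]; exact hn n)
        · intro b hb'
          exact pka_subset_gen P _ (Set.mem_image2_of_mem ha hb')
      exact key hb
end

section
/- In a star-continuous partially additive Kleene algebra, if ⟨{a_1,…,a_k}⟩ = ⟨{b_1,…,b_l}⟩ as star-ideals, then ⟨(a_1*·…·a_k*)*⟩ = ⟨(b_1*·…·b_l*)*⟩. -/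
/-- (a_1 * · … · a_k *) * for a finite list of generators. -/
def PKA.listStar {K : Type*} (P : PKA K) (l : List K) : K :=
  P.star (l.foldr (fun x acc => P.mul (P.star x) acc) P.one)

namespace PKA

variable {K : Type*} (P : PKA K)

theorem le_refl' (a : K) : P.le a a := ⟨P.summable_self a, P.add_self a⟩

theorem le_trans' {a b c : K} (hab : P.le a b) (hbc : P.le b c) : P.le a c := by
  obtain ⟨s1, e1⟩ := hab
  obtain ⟨s2, e2⟩ := hbc
  have H := P.add_assoc a b c s1 (by rw [e1]; exact s2) s2
  rw [e2] at H
  refine ⟨H.1, ?_⟩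
  rw [← H.2, e1, e2]

theorem le_antisymm' {a b : K} (hab : P.le a b) (hba : P.le b a) : a = b := by
  obtain ⟨s1, e1⟩ := hab
  obtain ⟨s2, e2⟩ := hba
  have hc := (P.add_comm a b s1).2
  rw [e1, e2] at hc
  exact hc.symm

theorem add_le' {x y a : K} (hxy : P.summable x y) (hx : P.le x a) (hy : P.le y a) :
    P.le (P.add x y) a := by
  obtain ⟨sx, ex⟩ := hx
  obtain ⟨sy, ey⟩ := hy
  have sax : P.summable a x := (P.add_comm x a sx).1
  have eax : P.add a x = a := by rw [← (P.add_comm x a sx).2, ex]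
  have say : P.summable a y := (P.add_comm y a sy).1
  have eay : P.add a y = a := by rw [← (P.add_comm y a sy).2, ey]
  have H := P.add_assoc a x y sax (by rw [eax]; exact say) hxy
  have s2 : P.summable (P.add x y) a := (P.add_comm a (P.add x y) H.1).1
  refine ⟨s2, ?_⟩
  rw [(P.add_comm (P.add x y) a s2).2, ← H.2, eax]
  exact eay

theorem mul_le_left' {x y : K} (z : K) (hx : P.le x y) :
    P.le (P.mul z x) (P.mul z y) := by
  obtain ⟨s, e⟩ := hx
  have H := P.left_distrib x y z s
  refine ⟨H.1, ?_⟩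
  rw [← H.2, e]

theorem mul_le_right' {x y : K} (z : K) (hx : P.le x y) :
    P.le (P.mul x z) (P.mul y z) := by
  obtain ⟨s, e⟩ := hx
  have H := P.right_distrib x y z s
  refine ⟨H.1, ?_⟩
  rw [← H.2, e]

theorem mul_le_mul' {a b c d : K} (h1 : P.le a b) (h2 : P.le c d) :
    P.le (P.mul a c) (P.mul b d) :=
  P.le_trans' (P.mul_le_right' c h1) (P.mul_le_left' b h2)

theorem one_le_star' (x : K) : P.le P.one (P.star x) := P.one_le_star x

theorem mul_star_le_star' (x : K) : P.le (P.mul x (P.star x)) (P.star x) :=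
  P.mul_star_le_star x

theorem star_ind_left' {a x : K} (h : P.le (P.mul a x) x) :
    P.le (P.mul (P.star a) x) x :=
  P.star_ind_left a x h

theorem le_star' (x : K) : P.le x (P.star x) := by
  have h1 : P.le (P.mul x P.one) (P.mul x (P.star x)) :=
    P.mul_le_left' x (P.one_le_star' x)
  rw [P.mul_one] at h1
  exact P.le_trans' h1 (P.mul_star_le_star' x)

theorem star_mono' {a b : K} (h : P.le a b) : P.le (P.star a) (P.star b) := by
  have h1 : P.le (P.mul a (P.star b)) (P.star b) :=
    P.le_trans' (P.mul_le_right' (P.star b) h) (P.mul_star_le_star' b)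
  have h2 := P.star_ind_left' h1
  have h3 : P.le (P.mul (P.star a) P.one) (P.mul (P.star a) (P.star b)) :=
    P.mul_le_left' _ (P.one_le_star' b)
  rw [P.mul_one] at h3
  exact P.le_trans' h3 h2

theorem star_mul_star_le' (s : K) : P.le (P.mul (P.star s) (P.star s)) (P.star s) :=
  P.star_ind_left' (P.mul_star_le_star' s)

theorem star_star_le' (s : K) : P.le (P.star (P.star s)) (P.star s) := by
  have h2 := P.star_ind_left' (P.star_mul_star_le' s)
  have h3 : P.le (P.mul (P.star (P.star s)) P.one)
      (P.mul (P.star (P.star s)) (P.star s)) :=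
    P.mul_le_left' _ (P.one_le_star' s)
  rw [P.mul_one] at h3
  exact P.le_trans' h3 h2

theorem isStarIdeal_down' (h : P.StarContinuous) (M : K) :
    P.IsStarIdeal {x | P.le x M} := by
  refine ⟨⟨M, P.le_refl' M⟩, ?_, ?_, ?_⟩
  · intro a ha b hb hs
    exact P.add_le' hs ha hb
  · intro x y hy hxy
    exact P.le_trans' hxy hy
  · intro a b c hn
    exact (h a b c).2 M hn

theorem subset_gen' (A : Set K) : A ⊆ P.gen A :=
  fun _ hx _ hI => hI.2 hx

theorem gen_subset' {A I : Set K} (hI : P.IsStarIdeal I) (hA : A ⊆ I) :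
    P.gen A ⊆ I :=
  fun _ hx => hx I ⟨hI, hA⟩

theorem one_le_prod' (l : List K) :
    P.le P.one (l.foldr (fun x acc => P.mul (P.star x) acc) P.one) := by
  induction l with
  | nil => exact P.le_refl' P.one
  | cons y t ih =>
    have h1 : P.le (P.mul P.one P.one)
        (P.mul (P.star y) (t.foldr (fun x acc => P.mul (P.star x) acc) P.one)) :=
      P.mul_le_mul' (P.one_le_star' y) ih
    rw [P.mul_one] at h1
    exact h1

theorem mem_le_prod' {x : K} {l : List K} (hx : x ∈ l) :
    P.le x (l.foldr (fun a acc => P.mul (P.star a) acc) P.one) := by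
  induction l with
  | nil => cases hx
  | cons y t ih =>
    rcases List.mem_cons.mp hx with rfl | hmem
    · have h1 : P.le x (P.mul (P.star x) P.one) := by
        rw [P.mul_one]; exact P.le_star' x
      have h2 : P.le (P.mul (P.star x) P.one)
          (P.mul (P.star x) (t.foldr (fun a acc => P.mul (P.star a) acc) P.one)) :=
        P.mul_le_left' _ (P.one_le_prod' t)
      exact P.le_trans' h1 h2
    · have h1 : P.le (P.mul P.one x)
          (P.mul (P.star y) (t.foldr (fun a acc => P.mul (P.star a) acc) P.one)) :=
        P.mul_le_mul' (P.one_le_star' y) (ih hmem)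
      rw [P.one_mul] at h1
      exact h1

theorem mem_le_listStar' {x : K} {l : List K} (hx : x ∈ l) :
    P.le x (P.listStar l) :=
  P.le_trans' (P.mem_le_prod' hx) (P.le_star' _)

theorem prod_le' {M : K} {l : List K} (h1 : P.le P.one M)
    (hMM : P.le (P.mul M M) M) (hl : ∀ x ∈ l, P.le (P.star x) M) :
    P.le (l.foldr (fun a acc => P.mul (P.star a) acc) P.one) M := by
  induction l with
  | nil => exact h1
  | cons y t ih =>
    have h2 := P.mul_le_mul' (hl y (by simp)) (ih (fun x hx => hl x (by simp [hx])))
    exact P.le_trans' h2 hMM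

theorem listStar_le' {la lb : List K} (hle : ∀ x ∈ la, P.le x (P.listStar lb)) :
    P.le (P.listStar la) (P.listStar lb) := by
  set s := lb.foldr (fun x acc => P.mul (P.star x) acc) P.one with hs
  have hdown : ∀ x ∈ la, P.le (P.star x) (P.star s) := fun x hx =>
    P.le_trans' (P.star_mono' (hle x hx)) (P.star_star_le' s)
  have hp := P.prod_le' (P.one_le_star' s) (P.star_mul_star_le' s) hdown
  exact P.le_trans' (P.star_mono' hp) (P.star_star_le' s)

end PKA

/-- If gen {a_1,…,a_k} = gen {b_1,…,b_l} then the generated star-ideals of the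
corresponding starred products coincide. -/
theorem pka_gen_star_welldef {K : Type*} (P : PKA K) (h : P.StarContinuous) :
    ∀ la lb : List K,
      P.gen {x | x ∈ la} = P.gen {x | x ∈ lb} →
      P.gen {P.listStar la} = P.gen {P.listStar lb} := by
  intro la lb hgen
  have key : ∀ (l l' : List K), P.gen {x | x ∈ l} ⊆ P.gen {x | x ∈ l'} →
      P.le (P.listStar l) (P.listStar l') := by
    intro l l' hsub
    apply P.listStar_le'
    intro x hx
    have hxg : x ∈ P.gen {x | x ∈ l'} := hsub (P.subset_gen' _ hx)
    exact P.gen_subset' (P.isStarIdeal_down' h (P.listStar l'))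
      (fun y hy => P.mem_le_listStar' hy) hxg
  have hab := key la lb hgen.subset
  have hba := key lb la hgen.symm.subset
  rw [P.le_antisymm' hab hba]
end

section
/- Let K be a star-continuous partially additive Kleene algebra and let TK be the set of finitely generated star-ideals of K, with operations ⟨A⟩ + ⟨B⟩ = ⟨A ∪ B⟩, ⟨A⟩ · ⟨B⟩ = ⟨A ⊙ B⟩, ⟨{a_1,…,a_k}⟩* = ⟨(a_1*·…·a_k*)*⟩, 0 = ⟨0⟩, 1 = ⟨1⟩. Then TK is a star-continuous (total) Kleene algebra; in particular, in TK the ordering is subset inclusion, 1 + I·I* ≤ I*, J + I·K ≤ K implies I*·J ≤ K, and I·J^n·K ≤ L for all n implies I·J*·K ≤ L. -/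
namespace TKProof

variable {K : Type*} (P : PKA K)

lemma le_refl (a : K) : P.le a a := ⟨P.summable_self a, P.add_self a⟩

lemma le_trans {a b c : K} (h1 : P.le a b) (h2 : P.le b c) : P.le a c := by
  obtain ⟨s1, e1⟩ := h1
  obtain ⟨s2, e2⟩ := h2
  obtain ⟨s3, e3⟩ := P.add_assoc a b c s1 (by rw [e1]; exact s2) s2
  rw [e1] at e3
  rw [e2] at s3 e3
  exact ⟨s3, e3.symm⟩

lemma le_antisymm {a b : K} (h1 : P.le a b) (h2 : P.le b a) : a = b := by
  obtain ⟨s1, e1⟩ := h1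
  obtain ⟨s2, e2⟩ := h2
  have := (P.add_comm a b s1).2
  rw [e1, e2] at this
  exact this.symm

lemma zero_le (a : K) : P.le P.zero a := by
  obtain ⟨s, e⟩ := P.add_comm a P.zero (P.summable_zero a)
  rw [P.add_zero] at e
  exact ⟨s, e.symm⟩

lemma add_le {a b c : K} (ha : P.le a c) (hb : P.le b c) (s : P.summable a b) :
    P.le (P.add a b) c := by
  obtain ⟨sa, ea⟩ := ha
  obtain ⟨sb, eb⟩ := hb
  obtain ⟨sca, eca⟩ := P.add_comm a c sa
  have hca : P.add c a = c := by rw [← eca, ea]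
  obtain ⟨scb, ecb⟩ := P.add_comm b c sb
  have hcb : P.add c b = c := by rw [← ecb, eb]
  obtain ⟨s3, e3⟩ := P.add_assoc c a b sca (by rw [hca]; exact scb) s
  rw [hca, hcb] at e3
  obtain ⟨s4, e4⟩ := P.add_comm c (P.add a b) s3
  exact ⟨s4, by rw [← e4, ← e3]⟩

lemma mul_le_mul_left (a : K) {b c : K} (hle : P.le b c) : P.le (P.mul a b) (P.mul a c) := by
  obtain ⟨s, e⟩ := hle
  obtain ⟨s2, e2⟩ := P.left_distrib b c a s
  rw [e] at e2
  exact ⟨s2, e2.symm⟩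

lemma mul_le_mul_right {a b : K} (hle : P.le a b) (c : K) : P.le (P.mul a c) (P.mul b c) := by
  obtain ⟨s, e⟩ := hle
  obtain ⟨s2, e2⟩ := P.right_distrib a b c s
  rw [e] at e2
  exact ⟨s2, e2.symm⟩

lemma mul_le_mul {a b c d : K} (h1 : P.le a b) (h2 : P.le c d) :
    P.le (P.mul a c) (P.mul b d) :=
  le_trans P (mul_le_mul_right P h1 c) (mul_le_mul_left P b h2)

lemma le_star (a : K) : P.le a (P.star a) := by
  have h1 : P.le (P.mul a P.one) (P.mul a (P.star a)) :=
    mul_le_mul_left P a (P.one_le_star a)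
  rw [P.mul_one] at h1
  exact le_trans P h1 (P.mul_star_le_star a)

lemma star_mono {a b : K} (hab : P.le a b) : P.le (P.star a) (P.star b) := by
  have h1 : P.le (P.mul a (P.star b)) (P.star b) :=
    le_trans P (mul_le_mul_right P hab (P.star b)) (P.mul_star_le_star b)
  have h2 := P.star_ind_left a (P.star b) h1
  have h3 : P.le (P.mul (P.star a) P.one) (P.mul (P.star a) (P.star b)) :=
    mul_le_mul_left P (P.star a) (P.one_le_star b)
  rw [P.mul_one] at h3
  exact le_trans P h3 h2

lemma star_mul_star_le (a : K) : P.le (P.mul (P.star a) (P.star a)) (P.star a) :=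
  P.star_ind_left a (P.star a) (P.mul_star_le_star a)

lemma star_star (a : K) : P.star (P.star a) = P.star a := by
  refine le_antisymm P ?_ (le_star P (P.star a))
  have h2 := P.star_ind_left (P.star a) (P.star a) (star_mul_star_le P a)
  have h3 : P.le (P.mul (P.star (P.star a)) P.one) (P.mul (P.star (P.star a)) (P.star a)) :=
    mul_le_mul_left P _ (P.one_le_star a)
  rw [P.mul_one] at h3
  exact le_trans P h3 h2

end TKProof
namespace TKProof

variable {K : Type*} (P : PKA K)

lemma ideal_zero_mem {I : Set K} (hI : P.IsStarIdeal I) : P.zero ∈ I := by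
  obtain ⟨⟨y, hy⟩, _, hdown, _⟩ := hI
  exact hdown P.zero y hy (zero_le P y)

lemma gen_isStarIdeal (A : Set K) : P.IsStarIdeal (P.gen A) := by
  refine ⟨⟨P.zero, ?_⟩, ?_, ?_, ?_⟩
  · intro I hI
    exact ideal_zero_mem P hI.1
  · intro a ha b hb s I hI
    exact hI.1.2.1 a (ha I hI) b (hb I hI) s
  · intro x y hy hxy I hI
    exact hI.1.2.2.1 x y (hy I hI) hxy
  · intro a b c hn I hI
    exact hI.1.2.2.2 a b c (fun n => hn n I hI)

lemma subset_gen (A : Set K) : A ⊆ P.gen A :=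
  fun _ hx => fun _ hI => hI.2 hx

lemma gen_least {A I : Set K} (hI : P.IsStarIdeal I) (hA : A ⊆ I) : P.gen A ⊆ I :=
  fun _ hx => hx I ⟨hI, hA⟩

lemma gen_mono {A B : Set K} (hAB : A ⊆ B) : P.gen A ⊆ P.gen B :=
  gen_least P (gen_isStarIdeal P B) (hAB.trans (subset_gen P B))

lemma gen_of_ideal {I : Set K} (hI : P.IsStarIdeal I) : P.gen I = I :=
  Set.Subset.antisymm (gen_least P hI (fun _ h => h)) (subset_gen P I)

lemma gen_union_left (A B : Set K) : P.gen (P.gen A ∪ B) = P.gen (A ∪ B) := by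
  refine Set.Subset.antisymm ?_ ?_
  · refine gen_least P (gen_isStarIdeal P (A ∪ B)) (Set.union_subset ?_ ?_)
    · exact gen_mono P (fun x hx => Or.inl hx)
    · exact fun x hx => subset_gen P (A ∪ B) (Or.inr hx)
  · exact gen_mono P (Set.union_subset_union_left B (subset_gen P A))

lemma gen_union_right (A B : Set K) : P.gen (A ∪ P.gen B) = P.gen (A ∪ B) := by
  refine Set.Subset.antisymm ?_ ?_
  · refine gen_least P (gen_isStarIdeal P (A ∪ B)) (Set.union_subset ?_ ?_)
    · exact fun x hx => subset_gen P (A ∪ B) (Or.inl hx)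
    · exact gen_mono P (fun x hx => Or.inr hx)
  · exact gen_mono P (Set.union_subset_union_right A (subset_gen P B))

lemma downset_ideal (hc : P.StarContinuous) (t : K) : P.IsStarIdeal {x | P.le x t} := by
  refine ⟨⟨P.zero, zero_le P t⟩, ?_, ?_, ?_⟩
  · exact fun a ha b hb s => add_le P ha hb s
  · exact fun x y hy hxy => le_trans P hxy hy
  · exact fun a b c hn => (hc a b c).2 t hn

lemma gen_singleton (hc : P.StarContinuous) (t : K) : P.gen {t} = {x | P.le x t} := by
  refine Set.Subset.antisymm ?_ ?_
  · exact gen_least P (downset_ideal P hc t) (by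
      intro x hx
      simp only [Set.mem_singleton_iff] at hx
      subst hx
      exact le_refl P x)
  · intro x hx
    exact (gen_isStarIdeal P {t}).2.2.1 x t (subset_gen P {t} rfl) hx

lemma leftFactor_ideal {C : Set K} (hC : P.IsStarIdeal C) (a : K) :
    P.IsStarIdeal {b | P.mul a b ∈ C} := by
  refine ⟨⟨P.zero, ?_⟩, ?_, ?_, ?_⟩
  · show P.mul a P.zero ∈ C
    rw [P.mul_zero]; exact ideal_zero_mem P hC
  · intro b hb b' hb' s
    obtain ⟨s2, e2⟩ := P.left_distrib b b' a s
    show P.mul a (P.add b b') ∈ C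
    rw [e2]
    exact hC.2.1 _ hb _ hb' s2
  · intro x y hy hxy
    exact hC.2.2.1 (P.mul a x) (P.mul a y) hy (mul_le_mul_left P a hxy)
  · intro u v w hn
    show P.mul a (P.mul u (P.mul (P.star v) w)) ∈ C
    rw [P.mul_assoc]
    refine hC.2.2.2 (P.mul a u) v w (fun n => ?_)
    rw [← P.mul_assoc]
    exact hn n

lemma rightFactor_ideal {C : Set K} (hC : P.IsStarIdeal C) (b : K) :
    P.IsStarIdeal {x | P.mul x b ∈ C} := by
  refine ⟨⟨P.zero, ?_⟩, ?_, ?_, ?_⟩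
  · show P.mul P.zero b ∈ C
    rw [P.zero_mul]; exact ideal_zero_mem P hC
  · intro x hx x' hx' s
    obtain ⟨s2, e2⟩ := P.right_distrib x x' b s
    show P.mul (P.add x x') b ∈ C
    rw [e2]
    exact hC.2.1 _ hx _ hx' s2
  · intro x y hy hxy
    exact hC.2.2.1 (P.mul x b) (P.mul y b) hy (mul_le_mul_right P hxy b)
  · intro u v w hn
    show P.mul (P.mul u (P.mul (P.star v) w)) b ∈ C
    rw [← P.mul_assoc, ← P.mul_assoc]
    refine hC.2.2.2 u v (P.mul w b) (fun n => ?_)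
    have h2 : P.mul (P.mul u (P.mul (P.pow v n) w)) b ∈ C := hn n
    rw [← P.mul_assoc, ← P.mul_assoc] at h2
    exact h2

lemma gen_image2_right (A B : Set K) :
    P.gen (Set.image2 P.mul A (P.gen B)) = P.gen (Set.image2 P.mul A B) := by
  refine Set.Subset.antisymm ?_ (gen_mono P (Set.image2_subset Set.Subset.rfl (subset_gen P B)))
  refine gen_least P (gen_isStarIdeal P _) ?_
  rintro _ ⟨a, ha, b', hb', rfl⟩
  have : P.gen B ⊆ {x | P.mul a x ∈ P.gen (Set.image2 P.mul A B)} :=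
    gen_least P (leftFactor_ideal P (gen_isStarIdeal P _) a)
      (fun b hb => subset_gen P _ (Set.mem_image2_of_mem ha hb))
  exact this hb'

lemma gen_image2_left (A B : Set K) :
    P.gen (Set.image2 P.mul (P.gen A) B) = P.gen (Set.image2 P.mul A B) := by
  refine Set.Subset.antisymm ?_ (gen_mono P (Set.image2_subset (subset_gen P A) Set.Subset.rfl))
  refine gen_least P (gen_isStarIdeal P _) ?_
  rintro _ ⟨a', ha', b, hb, rfl⟩
  have : P.gen A ⊆ {x | P.mul x b ∈ P.gen (Set.image2 P.mul A B)} :=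
    gen_least P (rightFactor_ideal P (gen_isStarIdeal P _) b)
      (fun a ha => subset_gen P _ (Set.mem_image2_of_mem ha hb))
  exact this ha'

end TKProof
namespace TKProof

variable {K : Type*} (P : PKA K)

def sProd (l : List K) : K := l.foldr (fun x acc => P.mul (P.star x) acc) P.one

lemma listStar_eq (l : List K) : P.listStar l = P.star (sProd P l) := rfl

lemma sProd_nil : sProd P ([] : List K) = P.one := rfl

lemma sProd_cons (x : K) (l : List K) : sProd P (x :: l) = P.mul (P.star x) (sProd P l) := rfl

lemma one_le_sProd (l : List K) : P.le P.one (sProd P l) := by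
  induction l with
  | nil => exact le_refl P P.one
  | cons x m ih =>
    have h := mul_le_mul P (P.one_le_star x) ih
    rw [P.one_mul] at h
    exact h

lemma star_le_sProd {x : K} {l : List K} (hx : x ∈ l) : P.le (P.star x) (sProd P l) := by
  induction l with
  | nil => cases hx
  | cons y m ih =>
    rw [sProd_cons]
    rcases List.mem_cons.1 hx with rfl | hxm
    · have h := mul_le_mul_left P (P.star x) (one_le_sProd P m)
      rw [P.mul_one] at h
      exact h
    · have h := mul_le_mul_right P (P.one_le_star y) (sProd P m)
      rw [P.one_mul] at h
      exact le_trans P (ih hxm) h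

lemma le_listStar_of_mem {x : K} {l : List K} (hx : x ∈ l) : P.le x (P.listStar l) :=
  le_trans P (le_star P x)
    (le_trans P (star_le_sProd P hx) (le_star P (sProd P l)))

lemma listStar_le_listStar (hc : P.StarContinuous) {l l' : List K}
    (hmem : ∀ y ∈ l', y ∈ P.gen {x | x ∈ l}) : P.le (P.listStar l') (P.listStar l) := by
  set t := P.listStar l with ht
  have hsub : P.gen {x | x ∈ l} ⊆ {x | P.le x t} := by
    rw [← gen_singleton P hc t]
    refine gen_least P (gen_isStarIdeal P _) ?_
    intro x hx
    refine (gen_isStarIdeal P {t}).2.2.1 x t (subset_gen P {t} rfl) (le_listStar_of_mem P hx)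
  have hyt : ∀ y ∈ l', P.le y t := fun y hy => hsub (hmem y hy)
  have htt : P.le (P.mul t t) t := star_mul_star_le P (sProd P l)
  have hst : P.star t = t := star_star P (sProd P l)
  have hsl : P.le (sProd P l') t := by
    clear hmem
    induction l' with
    | nil => exact P.one_le_star (sProd P l)
    | cons y m ih =>
      rw [sProd_cons]
      have hy : P.le (P.star y) t := by
        have := star_mono P (hyt y List.mem_cons_self)
        rw [hst] at this
        exact this
      have hm : P.le (sProd P m) t := ih (fun z hz => hyt z (List.mem_cons_of_mem y hz))
      exact le_trans P (mul_le_mul P hy hm) htt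
  have := star_mono P hsl
  rw [hst] at this
  exact this

lemma mul_listStar_le (a : K) (l : List K) :
    P.le (P.mul a (P.listStar l)) (P.listStar (a :: l)) := by
  rw [listStar_eq, listStar_eq, sProd_cons]
  set w := P.mul (P.star a) (sProd P l) with hw
  have haw : P.le a (P.star w) := by
    have h1 : P.le a (P.mul (P.star a) (sProd P l)) := by
      have h2 := mul_le_mul P (le_star P a) (one_le_sProd P l)
      rw [P.mul_one] at h2
      exact h2
    exact le_trans P h1 (le_star P w)
  have hsw : P.le (P.star (sProd P l)) (P.star w) := by
    refine star_mono P ?_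
    have h2 := mul_le_mul_right P (P.one_le_star a) (sProd P l)
    rw [P.one_mul] at h2
    exact h2
  exact le_trans P (mul_le_mul P haw hsw) (star_mul_star_le P w)

lemma sProd_append_singleton (l : List K) (a : K) :
    sProd P (l ++ [a]) = P.mul (sProd P l) (P.star a) := by
  induction l with
  | nil =>
    show P.mul (P.star a) P.one = P.mul P.one (P.star a)
    rw [P.mul_one, P.one_mul]
  | cons x m ih =>
    show P.mul (P.star x) (sProd P (m ++ [a])) = P.mul (P.mul (P.star x) (sProd P m)) (P.star a)
    rw [ih, P.mul_assoc]

lemma listStar_mul_le (l : List K) (a : K) :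
    P.le (P.mul (P.listStar l) a) (P.listStar (l ++ [a])) := by
  rw [listStar_eq, listStar_eq, sProd_append_singleton]
  set w := P.mul (sProd P l) (P.star a) with hw
  have hsw : P.le (P.star (sProd P l)) (P.star w) := by
    refine star_mono P ?_
    have h2 := mul_le_mul_left P (sProd P l) (P.one_le_star a)
    rw [P.mul_one] at h2
    exact h2
  have haw : P.le a (P.star w) := by
    have h1 : P.le (P.star a) w := by
      have h2 := mul_le_mul_right P (one_le_sProd P l) (P.star a)
      rw [P.one_mul] at h2
      exact h2
    exact le_trans P (le_star P a) (le_trans P h1 (le_star P w))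
  exact le_trans P (mul_le_mul P hsw haw) (star_mul_star_le P w)

inductive IsProd (S : Set K) : ℕ → K → Prop
  | nil : IsProd S 0 P.one
  | cons {n : ℕ} {x p : K} : x ∈ S → IsProd S n p → IsProd S (n + 1) (P.mul x p)

lemma isProd_append {S : Set K} {m n : ℕ} {p q : K}
    (hp : IsProd P S m p) (hq : IsProd P S n q) : IsProd P S (m + n) (P.mul p q) := by
  induction hp with
  | nil =>
    rw [P.one_mul, Nat.zero_add]
    exact hq
  | cons hx hp' ih =>
    rw [← P.mul_assoc, Nat.succ_add]
    exact IsProd.cons hx ih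

lemma isProd_pow {S : Set K} {x : K} (hx : x ∈ S) (n : ℕ) : IsProd P S n (P.pow x n) := by
  induction n with
  | zero => exact IsProd.nil
  | succ n ih => exact IsProd.cons hx ih

def Adm (N S : Set K) (a c : K) : Prop :=
  ∀ n p, IsProd P S n p → P.mul a (P.mul p c) ∈ N

lemma adm_mem {N S : Set K} {a c : K} (hadm : Adm P N S a c) : P.mul a c ∈ N := by
  have := hadm 0 P.one IsProd.nil
  rwa [P.one_mul] at this

lemma adm_star {N S : Set K} (hN : P.IsStarIdeal N) {a c x : K}
    (hadm : Adm P N S a c) (hx : x ∈ S) : Adm P N S a (P.mul (P.star x) c) := by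
  intro m p hp
  rw [P.mul_assoc a p]
  refine hN.2.2.2 (P.mul a p) x c (fun n' => ?_)
  rw [← P.mul_assoc a p]
  have h2 := hadm _ _ (isProd_append P hp (isProd_pow P hx n'))
  rw [← P.mul_assoc p] at h2
  exact h2

lemma adm_sProd {N S : Set K} (hN : P.IsStarIdeal N) {a c : K} {l : List K}
    (hl : ∀ y ∈ l, y ∈ S) (hadm : Adm P N S a c) : Adm P N S a (P.mul (sProd P l) c) := by
  induction l with
  | nil =>
    show Adm P N S a (P.mul P.one c)
    rw [P.one_mul]
    exact hadm
  | cons x m ih =>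
    show Adm P N S a (P.mul (P.mul (P.star x) (sProd P m)) c)
    rw [← P.mul_assoc]
    exact adm_star P hN (ih (fun z hz => hl z (List.mem_cons_of_mem x hz)))
      (hl x List.mem_cons_self)

lemma adm_listStar {N S : Set K} (hN : P.IsStarIdeal N) {a c : K} {l : List K}
    (hl : ∀ y ∈ l, y ∈ S) (hadm : Adm P N S a c) :
    P.mul a (P.mul (P.listStar l) c) ∈ N := by
  rw [listStar_eq]
  refine hN.2.2.2 a (sProd P l) c (fun n => ?_)
  have claim : ∀ n, Adm P N S a (P.mul (P.pow (sProd P l) n) c) := by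
    intro n
    induction n with
    | zero =>
      show Adm P N S a (P.mul P.one c)
      rw [P.one_mul]
      exact hadm
    | succ n ih =>
      show Adm P N S a (P.mul (P.mul (sProd P l) (P.pow (sProd P l) n)) c)
      rw [← P.mul_assoc]
      exact adm_sProd P hN hl ih
  exact adm_mem P (claim n)

end TKProof
namespace TKProof

variable {K : Type*} (P : PKA K)

abbrev T := {I : Set K // ∃ l : List K, I = P.gen {x | x ∈ l}}

lemma carrier_ideal (I : T P) : P.IsStarIdeal I.1 := by
  obtain ⟨l, hl⟩ := I.2
  rw [hl]
  exact gen_isStarIdeal P _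

lemma gen_carrier (I : T P) : P.gen I.1 = I.1 := gen_of_ideal P (carrier_ideal P I)

def zeroT : T P := ⟨P.gen {P.zero}, ⟨[P.zero], by congr 1; ext x; simp⟩⟩

def oneT : T P := ⟨P.gen {P.one}, ⟨[P.one], by congr 1; ext x; simp⟩⟩

def addT (I J : T P) : T P :=
  ⟨P.gen (I.1 ∪ J.1), by
    obtain ⟨l, hl⟩ := I.2
    obtain ⟨m, hm⟩ := J.2
    refine ⟨l ++ m, ?_⟩
    rw [hl, hm, gen_union_left, gen_union_right]
    have he : ({x | x ∈ l} ∪ {x | x ∈ m} : Set K) = {x | x ∈ l ++ m} := by ext x; simp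
    rw [he]⟩

def mulT (I J : T P) : T P :=
  ⟨P.gen (Set.image2 P.mul I.1 J.1), by
    obtain ⟨l, hl⟩ := I.2
    obtain ⟨m, hm⟩ := J.2
    refine ⟨l.flatMap (fun x => m.map (P.mul x)), ?_⟩
    rw [hl, hm, gen_image2_left, gen_image2_right]
    have he : Set.image2 P.mul {x | x ∈ l} {x | x ∈ m} =
        {x | x ∈ l.flatMap (fun x => m.map (P.mul x))} := by
      ext x
      simp [Set.mem_image2]
    rw [he]⟩

def starSet (I : T P) : Set K :=
  {x | ∃ l : List K, (∀ y ∈ l, y ∈ I.1) ∧ x = P.listStar l}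

lemma gen_starSet_eq (hc : P.StarContinuous) (I : T P) {l : List K}
    (hl : I.1 = P.gen {x | x ∈ l}) :
    P.gen (starSet P I) = P.gen {P.listStar l} := by
  refine Set.Subset.antisymm ?_ ?_
  · refine gen_least P (gen_isStarIdeal P _) ?_
    rintro _ ⟨l', hl', rfl⟩
    rw [gen_singleton P hc]
    exact listStar_le_listStar P hc (fun y hy => hl ▸ hl' y hy)
  · refine gen_mono P ?_
    intro x hx
    simp only [Set.mem_singleton_iff] at hx
    subst hx
    exact ⟨l, fun y hy => hl ▸ subset_gen P _ hy, rfl⟩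

def starT (hc : P.StarContinuous) (I : T P) : T P :=
  ⟨P.gen (starSet P I), by
    obtain ⟨l, hl⟩ := I.2
    refine ⟨[P.listStar l], ?_⟩
    rw [gen_starSet_eq P hc I hl]
    congr 1
    ext x
    simp⟩

lemma addT_eq_iff {I J : T P} : addT P I J = J ↔ I.1 ⊆ J.1 := by
  constructor
  · intro h
    have h1 : P.gen (I.1 ∪ J.1) = J.1 := congrArg Subtype.val h
    rw [← h1]
    exact (Set.subset_union_left).trans (subset_gen P _)
  · intro h
    refine Subtype.ext ?_
    show P.gen (I.1 ∪ J.1) = J.1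
    refine Set.Subset.antisymm ?_ ((Set.subset_union_right).trans (subset_gen P _))
    exact gen_least P (carrier_ideal P J) (Set.union_subset h Set.Subset.rfl)

lemma one_mem_starT (I : T P) : P.one ∈ P.gen (starSet P I) := by
  refine (gen_isStarIdeal P _).2.2.1 P.one (P.listStar [])
    (subset_gen P _ ⟨[], by simp, rfl⟩) ?_
  exact P.one_le_star (sProd P [])

lemma image2_mul_starT_subset (I : T P) :
    Set.image2 P.mul I.1 (P.gen (starSet P I)) ⊆ P.gen (starSet P I) := by
  rintro _ ⟨a, ha, z, hz, rfl⟩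
  have hsub : P.gen (starSet P I) ⊆ {b | P.mul a b ∈ P.gen (starSet P I)} := by
    refine gen_least P (leftFactor_ideal P (gen_isStarIdeal P _) a) ?_
    rintro _ ⟨l', hl', rfl⟩
    have hmem : P.listStar (a :: l') ∈ starSet P I :=
      ⟨a :: l', by
        intro y hy
        rcases List.mem_cons.1 hy with rfl | hym
        · exact ha
        · exact hl' y hym, rfl⟩
    exact (gen_isStarIdeal P _).2.2.1 _ _ (subset_gen P _ hmem) (mul_listStar_le P a l')
  exact hsub hz

lemma starT_mul_image2_subset (I : T P) :
    Set.image2 P.mul (P.gen (starSet P I)) I.1 ⊆ P.gen (starSet P I) := by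
  rintro _ ⟨z, hz, a, ha, rfl⟩
  have hsub : P.gen (starSet P I) ⊆ {x | P.mul x a ∈ P.gen (starSet P I)} := by
    refine gen_least P (rightFactor_ideal P (gen_isStarIdeal P _) a) ?_
    rintro _ ⟨l', hl', rfl⟩
    have hmem : P.listStar (l' ++ [a]) ∈ starSet P I :=
      ⟨l' ++ [a], by
        intro y hy
        rcases List.mem_append.1 hy with hym | hya
        · exact hl' y hym
        · simp only [List.mem_singleton] at hya
          subst hya
          exact ha, rfl⟩
    exact (gen_isStarIdeal P _).2.2.1 _ _ (subset_gen P _ hmem) (listStar_mul_le P l' a)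
  exact hsub hz

lemma isProd_mul_mem {L : Set K} (hL : P.IsStarIdeal L) {S : Set K}
    (habs : Set.image2 P.mul S L ⊆ L) {n : ℕ} {p : K} (hp : IsProd P S n p)
    {b : K} (hb : b ∈ L) : P.mul p b ∈ L := by
  induction hp with
  | nil =>
    rw [P.one_mul]
    exact hb
  | cons hx hp' ih =>
    rw [← P.mul_assoc]
    exact habs (Set.mem_image2_of_mem hx ih)

lemma mul_isProd_mem {L : Set K} {S : Set K}
    (habs : Set.image2 P.mul L S ⊆ L) {n : ℕ} {p : K} (hp : IsProd P S n p) :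
    ∀ c ∈ L, P.mul c p ∈ L := by
  induction hp with
  | nil =>
    intro c hc
    rw [P.mul_one]
    exact hc
  | cons hx hp' ih =>
    intro c hc
    rw [P.mul_assoc]
    exact ih _ (habs (Set.mem_image2_of_mem hc hx))

lemma starInd_left_subset (I L : T P)
    (habs : Set.image2 P.mul I.1 L.1 ⊆ L.1) :
    Set.image2 P.mul (P.gen (starSet P I)) L.1 ⊆ L.1 := by
  rintro _ ⟨z, hz, b, hb, rfl⟩
  refine gen_least P (rightFactor_ideal P (carrier_ideal P L) b) ?_ hz
  rintro _ ⟨l', hl', rfl⟩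
  have hadm : Adm P L.1 I.1 P.one b := by
    intro n p hp
    rw [P.one_mul]
    exact isProd_mul_mem P (carrier_ideal P L) habs hp hb
  have := adm_listStar P (carrier_ideal P L) hl' hadm
  show P.mul (P.listStar l') b ∈ L.1
  rwa [P.one_mul] at this

lemma starInd_right_subset (L I : T P)
    (habs : Set.image2 P.mul L.1 I.1 ⊆ L.1) :
    Set.image2 P.mul L.1 (P.gen (starSet P I)) ⊆ L.1 := by
  rintro _ ⟨c, hc, z, hz, rfl⟩
  refine gen_least P (leftFactor_ideal P (carrier_ideal P L) c) ?_ hz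
  rintro _ ⟨l', hl', rfl⟩
  have hadm : Adm P L.1 I.1 c P.one := by
    intro n p hp
    rw [P.mul_one p]
    exact mul_isProd_mem P habs hp c hc
  have := adm_listStar P (carrier_ideal P L) hl' hadm
  show P.mul c (P.listStar l') ∈ L.1
  rwa [P.mul_one (P.listStar l')] at this

end TKProof
namespace TKProof

variable {K : Type*} (P : PKA K)

lemma mulT_mono {X X' Y Y' : T P} (hX : X.1 ⊆ X'.1) (hY : Y.1 ⊆ Y'.1) :
    (mulT P X Y).1 ⊆ (mulT P X' Y').1 :=
  gen_mono P (Set.image2_subset hX hY)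

def Q (hc : P.StarContinuous) : PKA (T P) where
  summable _ _ := True
  add := addT P
  mul := mulT P
  star := starT P hc
  zero := zeroT P
  one := oneT P
  add_assoc x y z _ _ _ := ⟨trivial, Subtype.ext (by
    show P.gen (P.gen (x.1 ∪ y.1) ∪ z.1) = P.gen (x.1 ∪ P.gen (y.1 ∪ z.1))
    rw [gen_union_left, gen_union_right, Set.union_assoc])⟩
  add_comm x y _ := ⟨trivial, Subtype.ext (by
    show P.gen (x.1 ∪ y.1) = P.gen (y.1 ∪ x.1)
    rw [Set.union_comm])⟩
  summable_zero _ := trivial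
  add_zero x := Subtype.ext (by
    show P.gen (x.1 ∪ P.gen {P.zero}) = x.1
    rw [gen_union_right]
    have he : x.1 ∪ {P.zero} = x.1 :=
      Set.union_eq_self_of_subset_right
        (Set.singleton_subset_iff.2 (ideal_zero_mem P (carrier_ideal P x)))
    rw [he, gen_carrier])
  summable_self _ := trivial
  add_self x := Subtype.ext (by
    show P.gen (x.1 ∪ x.1) = x.1
    rw [Set.union_self]
    exact gen_carrier P x)
  mul_assoc x y z := Subtype.ext (by
    show P.gen (Set.image2 P.mul x.1 (P.gen (Set.image2 P.mul y.1 z.1))) =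
      P.gen (Set.image2 P.mul (P.gen (Set.image2 P.mul x.1 y.1)) z.1)
    rw [gen_image2_right, gen_image2_left,
      ← Set.image2_assoc (fun a b c => (P.mul_assoc a b c).symm)])
  one_mul x := Subtype.ext (by
    show P.gen (Set.image2 P.mul (P.gen {P.one}) x.1) = x.1
    rw [gen_image2_left, Set.image2_singleton_left,
      show P.mul P.one = id from funext P.one_mul, Set.image_id]
    exact gen_carrier P x)
  mul_one x := Subtype.ext (by
    show P.gen (Set.image2 P.mul x.1 (P.gen {P.one})) = x.1
    rw [gen_image2_right, Set.image2_singleton_right,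
      show (fun a => P.mul a P.one) = id from funext P.mul_one, Set.image_id]
    exact gen_carrier P x)
  left_distrib x y z _ := ⟨trivial, Subtype.ext (by
    show P.gen (Set.image2 P.mul z.1 (P.gen (x.1 ∪ y.1))) =
      P.gen (P.gen (Set.image2 P.mul z.1 x.1) ∪ P.gen (Set.image2 P.mul z.1 y.1))
    rw [gen_image2_right, gen_union_left, gen_union_right, Set.image2_union_right])⟩
  right_distrib x y z _ := ⟨trivial, Subtype.ext (by
    show P.gen (Set.image2 P.mul (P.gen (x.1 ∪ y.1)) z.1) =
      P.gen (P.gen (Set.image2 P.mul x.1 z.1) ∪ P.gen (Set.image2 P.mul y.1 z.1))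
    rw [gen_image2_left, gen_union_left, gen_union_right, Set.image2_union_left])⟩
  zero_mul x := Subtype.ext (by
    show P.gen (Set.image2 P.mul (P.gen {P.zero}) x.1) = P.gen {P.zero}
    rw [gen_image2_left, Set.image2_singleton_left]
    have he : (P.mul P.zero) '' x.1 = {P.zero} := by
      apply Set.Subset.antisymm
      · rintro _ ⟨b, _, rfl⟩
        simp [P.zero_mul]
      · intro w hw
        simp only [Set.mem_singleton_iff] at hw
        subst hw
        obtain ⟨b, hb⟩ := (carrier_ideal P x).1
        exact ⟨b, hb, P.zero_mul b⟩
    rw [he])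
  mul_zero x := Subtype.ext (by
    show P.gen (Set.image2 P.mul x.1 (P.gen {P.zero})) = P.gen {P.zero}
    rw [gen_image2_right, Set.image2_singleton_right]
    have he : (fun a => P.mul a P.zero) '' x.1 = {P.zero} := by
      apply Set.Subset.antisymm
      · rintro _ ⟨b, _, rfl⟩
        simp [P.mul_zero]
      · intro w hw
        simp only [Set.mem_singleton_iff] at hw
        subst hw
        obtain ⟨b, hb⟩ := (carrier_ideal P x).1
        exact ⟨b, hb, P.mul_zero b⟩
    rw [he])
  one_le_star x := ⟨trivial, (addT_eq_iff P).2 (by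
    show P.gen {P.one} ⊆ P.gen (starSet P x)
    exact gen_least P (gen_isStarIdeal P _)
      (Set.singleton_subset_iff.2 (one_mem_starT P x)))⟩
  mul_star_le_star x := ⟨trivial, (addT_eq_iff P).2 (by
    show P.gen (Set.image2 P.mul x.1 (P.gen (starSet P x))) ⊆ P.gen (starSet P x)
    exact gen_least P (gen_isStarIdeal P _) (image2_mul_starT_subset P x))⟩
  star_mul_le_star x := ⟨trivial, (addT_eq_iff P).2 (by
    show P.gen (Set.image2 P.mul (P.gen (starSet P x)) x.1) ⊆ P.gen (starSet P x)
    exact gen_least P (gen_isStarIdeal P _) (starT_mul_image2_subset P x))⟩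
  star_ind_left a x hax := by
    obtain ⟨-, heq⟩ := hax
    have habs : Set.image2 P.mul a.1 x.1 ⊆ x.1 :=
      (subset_gen P _).trans ((addT_eq_iff P).1 heq)
    refine ⟨trivial, (addT_eq_iff P).2 ?_⟩
    show P.gen (Set.image2 P.mul (P.gen (starSet P a)) x.1) ⊆ x.1
    exact gen_least P (carrier_ideal P x) (starInd_left_subset P a x habs)
  star_ind_right a x hax := by
    obtain ⟨-, heq⟩ := hax
    have habs : Set.image2 P.mul x.1 a.1 ⊆ x.1 :=
      (subset_gen P _).trans ((addT_eq_iff P).1 heq)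
    refine ⟨trivial, (addT_eq_iff P).2 ?_⟩
    show P.gen (Set.image2 P.mul x.1 (P.gen (starSet P a))) ⊆ x.1
    exact gen_least P (carrier_ideal P x) (starInd_right_subset P x a habs)

variable (hc : P.StarContinuous)

lemma leQ_iff (I J : T P) : (Q P hc).le I J ↔ I.1 ⊆ J.1 := by
  constructor
  · rintro ⟨-, heq⟩
    exact (addT_eq_iff P).1 heq
  · intro hs
    exact ⟨trivial, (addT_eq_iff P).2 hs⟩

lemma powQ_subset_star (J : T P) (n : ℕ) :
    ((Q P hc).pow J n).1 ⊆ (starT P hc J).1 := by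
  induction n with
  | zero =>
    show P.gen {P.one} ⊆ P.gen (starSet P J)
    exact gen_least P (gen_isStarIdeal P _)
      (Set.singleton_subset_iff.2 (one_mem_starT P J))
  | succ n ih =>
    show (mulT P J ((Q P hc).pow J n)).1 ⊆ P.gen (starSet P J)
    refine gen_least P (gen_isStarIdeal P _) ?_
    exact (Set.image2_subset Set.Subset.rfl ih).trans (image2_mul_starT_subset P J)

lemma isProd_mem_powQ {J : T P} {n : ℕ} {p : K} (hp : IsProd P J.1 n p) :
    p ∈ ((Q P hc).pow J n).1 := by
  induction hp with
  | nil => exact subset_gen P _ rfl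
  | cons hx _ ih => exact subset_gen P _ (Set.mem_image2_of_mem hx ih)

lemma starCont_main (I J L N : T P)
    (Hadm : ∀ a ∈ I.1, ∀ c ∈ L.1, Adm P N.1 J.1 a c) :
    ((Q P hc).mul I ((Q P hc).mul ((Q P hc).star J) L)).1 ⊆ N.1 := by
  refine gen_least P (carrier_ideal P N) ?_
  rintro _ ⟨a, ha, z, hz, rfl⟩
  have h1 : P.gen (Set.image2 P.mul (P.gen (starSet P J)) L.1) ⊆
      {b | P.mul a b ∈ N.1} := by
    refine gen_least P (leftFactor_ideal P (carrier_ideal P N) a) ?_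
    rintro _ ⟨w, hw, c, hcL, rfl⟩
    have h2 : P.gen (starSet P J) ⊆
        {x | P.mul x c ∈ {b | P.mul a b ∈ N.1}} := by
      refine gen_least P
        (rightFactor_ideal P (leftFactor_ideal P (carrier_ideal P N) a) c) ?_
      rintro _ ⟨l', hl', rfl⟩
      exact adm_listStar P (carrier_ideal P N) hl' (Hadm a ha c hcL)
    exact h2 hw
  exact h1 hz

end TKProof
/-- The set TK of finitely generated star-ideals of K, with the operations
gen A + gen B = gen (A ∪ B), gen A · gen B = gen (A ⊙ B),
(gen {a_1,…,a_k})* = gen {(a_1*·…·a_k*)*}, 0 = gen {0}, 1 = gen {1},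
is a star-continuous total Kleene algebra whose order is subset inclusion;
in particular 1 + I·I* ≤ I*, J + I·L ≤ L implies I*·J ≤ L, and
I·J^n·L ≤ N for all n implies I·J*·L ≤ N. -/
theorem pka_TK_is_starCont_KA {K : Type*} (P : PKA K) (h : P.StarContinuous) :
    ∃ Q : PKA {I : Set K // ∃ l : List K, I = P.gen {x | x ∈ l}},
      (∀ I J, Q.summable I J) ∧
      Q.StarContinuous ∧
      (∀ I J, Q.le I J ↔ (I : Set K) ⊆ (J : Set K)) ∧
      (Q.zero : Set K) = P.gen {P.zero} ∧
      (Q.one : Set K) = P.gen {P.one} ∧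
      (∀ I J, (Q.add I J : Set K) = P.gen ((I : Set K) ∪ (J : Set K))) ∧
      (∀ I J, (Q.mul I J : Set K) = P.gen (Set.image2 P.mul (I : Set K) (J : Set K))) ∧
      (∀ l : List K,
        (Q.star ⟨P.gen {x | x ∈ l}, ⟨l, rfl⟩⟩ : Set K) = P.gen {P.listStar l}) ∧
      (∀ I, Q.le (Q.add Q.one (Q.mul I (Q.star I))) (Q.star I)) ∧
      (∀ I J L, Q.le (Q.add J (Q.mul I L)) L → Q.le (Q.mul (Q.star I) J) L) ∧
      (∀ I J L N, (∀ n, Q.le (Q.mul I (Q.mul (Q.pow J n) L)) N) →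
        Q.le (Q.mul I (Q.mul (Q.star J) L)) N) := by
  classical
  refine ⟨TKProof.Q P h, fun _ _ => trivial, ?_, TKProof.leQ_iff P h, rfl, rfl,
    fun I J => rfl, fun I J => rfl, ?_, ?_, ?_, ?_⟩
  · -- star continuity of Q
    intro a b c
    constructor
    · intro n
      exact (TKProof.leQ_iff P h _ _).2
        (TKProof.mulT_mono P Set.Subset.rfl
          (TKProof.mulT_mono P (TKProof.powQ_subset_star P h b n) Set.Subset.rfl))
    · intro w hw
      refine (TKProof.leQ_iff P h _ _).2 (TKProof.starCont_main P h a b c w ?_)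
      intro a' ha' c' hc' n p hp
      have hsub := (TKProof.leQ_iff P h _ _).1 (hw n)
      exact hsub (TKProof.subset_gen P _ (Set.mem_image2_of_mem ha'
        (TKProof.subset_gen P _
          (Set.mem_image2_of_mem (TKProof.isProd_mem_powQ P h hp) hc'))))
  · -- star of a generated ideal
    intro l
    exact TKProof.gen_starSet_eq P h ⟨P.gen {x | x ∈ l}, ⟨l, rfl⟩⟩ rfl
  · -- 1 + I·I* ≤ I*
    intro I
    refine (TKProof.leQ_iff P h _ _).2 ?_
    show P.gen (P.gen {P.one} ∪ P.gen (Set.image2 P.mul I.1 (P.gen (TKProof.starSet P I)))) ⊆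
      P.gen (TKProof.starSet P I)
    refine TKProof.gen_least P (TKProof.gen_isStarIdeal P _) (Set.union_subset ?_ ?_)
    · exact TKProof.gen_least P (TKProof.gen_isStarIdeal P _)
        (Set.singleton_subset_iff.2 (TKProof.one_mem_starT P I))
    · exact TKProof.gen_least P (TKProof.gen_isStarIdeal P _)
        (TKProof.image2_mul_starT_subset P I)
  · -- star induction
    intro I J L hle
    have hsub := (TKProof.leQ_iff P h _ _).1 hle
    have hJ : J.1 ⊆ L.1 :=
      ((Set.subset_union_left).trans (TKProof.subset_gen P _)).trans hsub
    have habs : Set.image2 P.mul I.1 L.1 ⊆ L.1 :=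
      ((TKProof.subset_gen P _).trans
        ((Set.subset_union_right).trans (TKProof.subset_gen P _))).trans hsub
    refine (TKProof.leQ_iff P h _ _).2 ?_
    show P.gen (Set.image2 P.mul (P.gen (TKProof.starSet P I)) J.1) ⊆ L.1
    refine TKProof.gen_least P (TKProof.carrier_ideal P L) ?_
    rintro _ ⟨z, hz, b, hb, rfl⟩
    exact TKProof.starInd_left_subset P I L habs (Set.mem_image2_of_mem hz (hJ hb))
  · -- star continuity inequality
    intro I J L N hn
    refine (TKProof.leQ_iff P h _ _).2 (TKProof.starCont_main P h I J L N ?_)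
    intro a' ha' c' hc' n p hp
    have hsub := (TKProof.leQ_iff P h _ _).1 (hn n)
    exact hsub (TKProof.subset_gen P _ (Set.mem_image2_of_mem ha'
      (TKProof.subset_gen P _
        (Set.mem_image2_of_mem (TKProof.isProd_mem_powQ P h hp) hc'))))
end

section
/- If f : K → K' is a homomorphism of star-continuous partially additive Kleene algebras, then for every subset A of K, ⟨f[⟨A⟩]⟩ = ⟨f[A]⟩, where f[A] = {f(a) | a ∈ A} and ⟨·⟩ denotes the generated star-ideal. -/
/-- A homomorphism of partially additive Kleene algebras. -/
def IsPKAHom {K K' : Type*} (P : PKA K) (Q : PKA K') (f : K → K') : Prop :=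
  (∀ a b, P.summable a b → Q.summable (f a) (f b) ∧ f (P.add a b) = Q.add (f a) (f b)) ∧
  (∀ a b, f (P.mul a b) = Q.mul (f a) (f b)) ∧
  (∀ a, f (P.star a) = Q.star (f a)) ∧
  f P.zero = Q.zero ∧
  f P.one = Q.one

lemma PKA.zero_le {K : Type*} (P : PKA K) (y : K) : P.le P.zero y := by
  obtain ⟨h1, h2⟩ := P.add_comm y P.zero (P.summable_zero y)
  exact ⟨h1, by rw [← h2, P.add_zero]⟩

lemma PKA.zero_mem {K : Type*} (P : PKA K) {I : Set K} (hI : P.IsStarIdeal I) :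
    P.zero ∈ I := by
  obtain ⟨⟨y, hy⟩, _, hdown, _⟩ := hI
  exact hdown _ y hy (P.zero_le y)

lemma PKA.subset_gen {K : Type*} (P : PKA K) (A : Set K) : A ⊆ P.gen A := by
  intro a ha I hI
  exact hI.2 ha

lemma PKA.gen_subset {K : Type*} (P : PKA K) {A I : Set K}
    (hI : P.IsStarIdeal I) (hAI : A ⊆ I) : P.gen A ⊆ I :=
  fun _ hx => hx I ⟨hI, hAI⟩

lemma PKA.gen_isStarIdeal {K : Type*} (P : PKA K) (A : Set K) :
    P.IsStarIdeal (P.gen A) := by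
  refine ⟨⟨P.zero, fun I hI => P.zero_mem hI.1⟩, ?_, ?_, ?_⟩
  · intro a ha b hb hs I hI
    exact hI.1.2.1 a (ha I hI) b (hb I hI) hs
  · intro x y hy hle I hI
    exact hI.1.2.2.1 x y (hy I hI) hle
  · intro a b c hn I hI
    exact hI.1.2.2.2 a b c (fun n => hn n I hI)

lemma PKA.gen_mono {K : Type*} (P : PKA K) {A B : Set K} (h : A ⊆ B) :
    P.gen A ⊆ P.gen B :=
  P.gen_subset (P.gen_isStarIdeal B) (h.trans (P.subset_gen B))

lemma IsPKAHom.map_pow {K K' : Type*} {P : PKA K} {Q : PKA K'} {f : K → K'}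
    (hf : IsPKAHom P Q f) (b : K) : ∀ n, f (P.pow b n) = Q.pow (f b) n
  | 0 => hf.2.2.2.2
  | n + 1 => by
      show f (P.mul b (P.pow b n)) = Q.mul (f b) (Q.pow (f b) n)
      rw [hf.2.1, hf.map_pow b n]

lemma IsPKAHom.map_le {K K' : Type*} {P : PKA K} {Q : PKA K'} {f : K → K'}
    (hf : IsPKAHom P Q f) {x y : K} (h : P.le x y) : Q.le (f x) (f y) := by
  obtain ⟨hs, ha⟩ := h
  obtain ⟨hs', ha'⟩ := hf.1 x y hs
  exact ⟨hs', by rw [← ha', ha]⟩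

lemma IsPKAHom.preimage_starIdeal {K K' : Type*} {P : PKA K} {Q : PKA K'} {f : K → K'}
    (hf : IsPKAHom P Q f) {J : Set K'} (hJ : Q.IsStarIdeal J) :
    P.IsStarIdeal (f ⁻¹' J) := by
  refine ⟨⟨P.zero, ?_⟩, ?_, ?_, ?_⟩
  · show f P.zero ∈ J
    rw [hf.2.2.2.1]; exact Q.zero_mem hJ
  · intro a ha b hb hs
    show f (P.add a b) ∈ J
    rw [(hf.1 a b hs).2]
    exact hJ.2.1 _ ha _ hb (hf.1 a b hs).1
  · intro x y hy hle
    exact hJ.2.2.1 (f x) (f y) hy (hf.map_le hle)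
  · intro a b c hn
    show f (P.mul a (P.mul (P.star b) c)) ∈ J
    rw [hf.2.1, hf.2.1, hf.2.2.1]
    apply hJ.2.2.2 (f a) (f b) (f c)
    intro n
    have := hn n
    show Q.mul (f a) (Q.mul (Q.pow (f b) n) (f c)) ∈ J
    rw [← hf.map_pow, ← hf.2.1, ← hf.2.1]
    exact this

/-- For a homomorphism f of star-continuous PKAs and any subset A,
gen (f [gen A]) = gen (f [A]). -/
theorem pka_hom_gen_image {K K' : Type*} (P : PKA K) (Q : PKA K')
    (hP : P.StarContinuous) (hQ : Q.StarContinuous)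
    (f : K → K') (hf : IsPKAHom P Q f) :
    ∀ A : Set K, Q.gen (f '' P.gen A) = Q.gen (f '' A) := by
  intro A
  apply Set.Subset.antisymm
  · apply Q.gen_subset (Q.gen_isStarIdeal (f '' A))
    rintro _ ⟨x, hx, rfl⟩
    have hpre : P.IsStarIdeal (f ⁻¹' Q.gen (f '' A)) :=
      hf.preimage_starIdeal (Q.gen_isStarIdeal (f '' A))
    have hsub : A ⊆ f ⁻¹' Q.gen (f '' A) := fun a ha =>
      Q.subset_gen (f '' A) ⟨a, ha, rfl⟩
    exact P.gen_subset hpre hsub hx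
  · exact Q.gen_mono (Set.image_mono (f := f) (P.subset_gen A))
end
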